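/- Let (t, u, v) be consecutive vertices on the convex hull of a finite planar point set P in general position, and let z be a hull vertex not in {t, u, v}. Then the sensitivity of z, defined as area(CH(P)) − area(CH(P \ {z})), is unchanged when u is deleted: area(CH(P)) − area(CH(P \ {z})) = area(CH(P \ {u})) − area(CH(P \ {u, z})). -/

import Mathlib

open Set MeasureTheory

noncomputable section

abbrev Pt := EuclideanSpace ℝ (Fin 2)

/-- General position: no three distinct points of `S` are collinear. -/
def GenPos (S : Set Pt) : Prop :=
  ∀ p q r : Pt, p ∈ S → q ∈ S → r ∈ S → p ≠ q → q ≠ r → p ≠ r →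
    ¬ Collinear ℝ ({p, q, r} : Set Pt)

/-- `p` is a vertex (extreme point) of the convex hull of `S`. -/
def IsHullVertex (S : Set Pt) (p : Pt) : Prop :=
  p ∈ S ∧ p ∉ convexHull ℝ (S \ {p})

/-- `p` is active for the hull vertex `u` of `S`: it is a vertex of
`CH(S \ {u})` but not a vertex of `CH(S)`. -/
def ActiveFor (S : Set Pt) (u p : Pt) : Prop :=
  IsHullVertex (S \ {u}) p ∧ ¬ IsHullVertex S p

/-- `a` and `b` are adjacent (consecutive) vertices on the convex hull of `S`:
both are hull vertices and the segment between them lies on the hull boundary. -/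
def AdjacentVertices (S : Set Pt) (a b : Pt) : Prop :=
  a ≠ b ∧ IsHullVertex S a ∧ IsHullVertex S b ∧
    segment ℝ a b ⊆ frontier (convexHull ℝ S)

/-- 2D cross product. -/
def cross2 (a b : Pt) : ℝ := a 0 * b 1 - a 1 * b 0

/-- `(t, u, v)` are consecutive vertices of the hull of `S`, in clockwise order
(the turn `t → u → v` is a right turn). -/
def ConsecutiveCW (S : Set Pt) (t u v : Pt) : Prop :=
  AdjacentVertices S t u ∧ AdjacentVertices S u v ∧ t ≠ v ∧
    cross2 (u - t) (v - u) ≤ 0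

/-- Area of the convex hull of `S`. -/
def hullArea (S : Set Pt) : ENNReal := volume (convexHull ℝ S)

/-! ### Auxiliary lemmas -/

lemma aux_apply_smul (a : ℝ) (p : Pt) (i : Fin 2) : (a • p) i = a * p i := rfl
lemma aux_apply_add (p q : Pt) (i : Fin 2) : (p + q) i = p i + q i := rfl
lemma aux_apply_sub (p q : Pt) (i : Fin 2) : (p - q) i = p i - q i := rfl

lemma aux_pt_ext {p q : Pt} (h0 : p 0 = q 0) (h1 : p 1 = q 1) : p = q := by
  apply PiLp.ext; intro i; fin_cases i <;> assumption

set_option linter.unnecessarySeqFocus false in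
/-- Decomposition in a 2D basis given by a nonzero cross product. -/
lemma aux_cross_decomp (d e w : Pt) (h : cross2 d e ≠ 0) :
    w = (cross2 w e / cross2 d e) • d + (cross2 d w / cross2 d e) • e := by
  apply aux_pt_ext <;>
    (simp only [aux_apply_add, aux_apply_smul, cross2] at * <;>
      rw [div_mul_eq_mul_div, div_mul_eq_mul_div, ← add_div, eq_div_iff h] <;> ring)

set_option linter.unnecessarySeqFocus false in
lemma aux_cross_parallel (d w : Pt) (hd : d ≠ 0) (h : cross2 d w = 0) : ∃ k : ℝ, w = k • d := by
  have hd' : d 0 ≠ 0 ∨ d 1 ≠ 0 := by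
    by_contra hc
    push_neg at hc
    exact hd (aux_pt_ext (by simpa using hc.1) (by simpa using hc.2))
  rcases hd' with h0 | h1
  · refine ⟨w 0 / d 0, aux_pt_ext ?_ ?_⟩ <;>
      simp only [aux_apply_smul, cross2] at * <;> field_simp <;> linarith [h]
  · refine ⟨w 1 / d 1, aux_pt_ext ?_ ?_⟩ <;>
      simp only [aux_apply_smul, cross2] at * <;> field_simp <;> linarith [h]

/-- If a nonzero linear functional vanishes on two vectors in the plane,
their cross product vanishes. -/
lemma aux_cross2_eq_zero_of_ker {f : Pt →L[ℝ] ℝ} {w1 w2 : Pt}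
    (hne : ∃ y : Pt, f y ≠ 0) (h1 : f w1 = 0) (h2 : f w2 = 0) : cross2 w1 w2 = 0 := by
  set E0 : Pt := EuclideanSpace.single 0 1 with hE0
  set E1 : Pt := EuclideanSpace.single 1 1 with hE1
  have hdec : ∀ y : Pt, y = y 0 • E0 + y 1 • E1 := by
    intro y
    apply aux_pt_ext <;>
      simp [hE0, hE1, aux_apply_add, aux_apply_smul, EuclideanSpace.single_apply]
  have hfy : ∀ y : Pt, f y = y 0 * f E0 + y 1 * f E1 := by
    intro y
    conv_lhs => rw [hdec y]
    simp [f.map_smul]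
  obtain ⟨y, hy⟩ := hne
  rw [hfy] at hy h1 h2
  have hphi : f E0 ≠ 0 ∨ f E1 ≠ 0 := by
    by_contra hc; push_neg at hc
    rw [hc.1, hc.2] at hy; simp at hy
  unfold cross2
  rcases hphi with h | h
  · have key : (w1 0 * w2 1 - w1 1 * w2 0) * f E0 = 0 := by
      linear_combination w2 1 * h1 - w1 1 * h2
    exact (mul_eq_zero.mp key).resolve_right h
  · have key : (w1 0 * w2 1 - w1 1 * w2 0) * f E1 = 0 := by
      linear_combination w1 0 * h2 - w2 0 * h1
    exact (mul_eq_zero.mp key).resolve_right h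

lemma aux_collinear_of_cross2 {t u v : Pt} (h : cross2 (t - u) (v - u) = 0) :
    Collinear ℝ ({t, u, v} : Set Pt) := by
  by_cases htu : t = u
  · subst htu
    rw [Set.insert_eq_self.mpr (by simp)]
    exact collinear_pair ℝ t v
  · obtain ⟨k, hk⟩ := aux_cross_parallel (t - u) (v - u) (sub_ne_zero.mpr htu) h
    rw [collinear_iff_of_mem (show u ∈ ({t,u,v} : Set Pt) by simp)]
    refine ⟨t - u, ?_⟩
    rintro p (rfl | rfl | rfl)
    · exact ⟨1, by simp⟩
    · exact ⟨0, by simp⟩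
    · exact ⟨k, by rw [← hk]; simp⟩

lemma aux_collinear_of_cross2' {t u v : Pt} (h : cross2 (u - t) (v - t) = 0) :
    Collinear ℝ ({t, u, v} : Set Pt) := by
  by_cases hut : u = t
  · subst hut
    rw [Set.insert_idem]
    exact collinear_pair ℝ u v
  · obtain ⟨k, hk⟩ := aux_cross_parallel (u - t) (v - t) (sub_ne_zero.mpr hut) h
    rw [collinear_iff_of_mem (show t ∈ ({t,u,v} : Set Pt) by simp)]
    refine ⟨u - t, ?_⟩
    rintro p (rfl | rfl | rfl)
    · exact ⟨0, by simp⟩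
    · exact ⟨1, by simp⟩
    · exact ⟨k, by rw [← hk]; simp⟩

/-- Ternary convex combination membership. -/
lemma aux_combo3_mem {s : Set Pt} (hs : Convex ℝ s) {t u v : Pt} (ht : t ∈ s) (hu : u ∈ s)
    (hv : v ∈ s) {a b c : ℝ} (ha : 0 ≤ a) (hb : 0 ≤ b) (hc : 0 ≤ c) (habc : a + b + c = 1) :
    a • t + b • u + c • v ∈ s := by
  by_cases hbc : b + c = 0
  · have hb0 : b = 0 := by linarith
    have hc0 : c = 0 := by linarith
    have ha1 : a = 1 := by linarith
    simp [hb0, hc0, ha1, ht]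
  · have hbc' : 0 < b + c := lt_of_le_of_ne (by linarith) (Ne.symm hbc)
    have hw : (b / (b + c)) • u + (c / (b + c)) • v ∈ s :=
      hs hu hv (div_nonneg hb hbc'.le) (div_nonneg hc hbc'.le) (by field_simp)
    have := hs ht hw ha (by positivity) (by linarith : a + (b + c) = 1)
    convert this using 1
    match_scalars <;> field_simp

/-- Halfspace split lemma: if all points of `A` with `0 ≤ g` lie in a convex set `D`,
and all hull points on `{g = 0}` lie in `D`, then all hull points with `0 ≤ g` lie in `D`. -/
lemma aux_split_lemma {A D : Set Pt} {g : Pt → ℝ}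
    (haff : ∀ p q : Pt, ∀ a b : ℝ, a + b = 1 → g (a • p + b • q) = a * g p + b * g q)
    (hD : Convex ℝ D)
    (hA : ∀ p ∈ A, 0 ≤ g p → p ∈ D)
    (hM : ∀ y ∈ convexHull ℝ A, g y = 0 → y ∈ D)
    {x : Pt} (hx : x ∈ convexHull ℝ A) (hgx : 0 ≤ g x) : x ∈ D := by
  classical
  set Ap := {p ∈ A | 0 ≤ g p} with hAp
  set Am := {p ∈ A | g p < 0} with hAm
  have hunion : A = Ap ∪ Am := by
    ext p; simp only [hAp, hAm, Set.mem_union, Set.mem_setOf_eq]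
    constructor
    · intro h; by_cases h0 : 0 ≤ g p
      · exact Or.inl ⟨h, h0⟩
      · exact Or.inr ⟨h, lt_of_not_ge h0⟩
    · rintro (⟨h, _⟩ | ⟨h, _⟩) <;> exact h
  have hconvp : Convex ℝ {y : Pt | 0 ≤ g y} := by
    intro p hp q hq a b ha hb hab
    simp only [Set.mem_setOf_eq] at *
    rw [haff p q a b hab]
    have := mul_le_mul_of_nonneg_left hp ha
    have := mul_le_mul_of_nonneg_left hq hb
    nlinarith
  have hconvm : Convex ℝ {y : Pt | g y < 0} := by
    intro p hp q hq a b ha hb hab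
    simp only [Set.mem_setOf_eq] at *
    rw [haff p q a b hab]
    rcases eq_or_lt_of_le ha with h | h
    · rcases eq_or_lt_of_le hb with h' | h'
      · exfalso; rw [← h, ← h'] at hab; norm_num at hab
      · nlinarith
    · rcases eq_or_lt_of_le hb with h' | h'
      · nlinarith
      · nlinarith
  have hApD : convexHull ℝ Ap ⊆ D :=
    convexHull_min (fun p hp => hA p hp.1 hp.2) hD
  by_cases hap : Ap.Nonempty
  · by_cases ham : Am.Nonempty
    · -- both nonempty
      rw [hunion, convexHull_union hap ham, mem_convexJoin] at hx
      obtain ⟨p, hp, q, hq, hseg⟩ := hx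
      obtain ⟨a, b, ha, hb, hab, hx⟩ := hseg
      have hgp : 0 ≤ g p := convexHull_min (fun r hr => hr.2) hconvp hp
      have hgq : g q < 0 := convexHull_min (fun r hr => hr.2) hconvm hq
      have hpD : p ∈ D := hApD hp
      have hpA : p ∈ convexHull ℝ A :=
        convexHull_mono (by rw [hunion]; exact subset_union_left) hp
      have hqA : q ∈ convexHull ℝ A :=
        convexHull_mono (by rw [hunion]; exact subset_union_right) hq
      rcases eq_or_lt_of_le hb with hb0 | hb0
      · have : x = p := by rw [← hx, ← hb0]; rw [← hb0] at hab; simp at hab; rw [hab]; simp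
        rw [this]; exact hpD
      · have hden : 0 < g p - g q := by linarith
        set s0 := g p / (g p - g q) with hs0
        have hs0a : 0 ≤ s0 := div_nonneg hgp hden.le
        have hs0b : s0 ≤ 1 := by rw [hs0, div_le_one hden]; linarith
        set m := (1 - s0) • p + s0 • q with hm
        have hgm : g m = 0 := by
          rw [hm, haff p q (1 - s0) s0 (by ring)]
          rw [hs0]; field_simp; ring
        have hmA : m ∈ convexHull ℝ A :=
          (convex_convexHull ℝ A) hpA hqA (by linarith) hs0a (by ring)
        have hmD : m ∈ D := hM m hmA hgm
        have hgx' : g x = a * g p + b * g q := by rw [← hx, haff p q a b hab]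
        have hbs0 : b ≤ s0 := by
          rw [hs0, le_div_iff₀ hden]
          have : a = 1 - b := by linarith
          rw [this] at hgx'; nlinarith
        have hs0pos : 0 < s0 := lt_of_lt_of_le hb0 hbs0
        have hxm : x = (1 - b / s0) • p + (b / s0) • m := by
          rw [hm, ← hx]
          match_scalars <;> field_simp
          linear_combination s0 * hab
        have h1 : 0 ≤ b / s0 := div_nonneg hb hs0pos.le
        have h2 : b / s0 ≤ 1 := by rw [div_le_one hs0pos]; exact hbs0
        rw [hxm]
        exact hD hpD hmD (by linarith) h1 (by ring)
    · -- Am empty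
      have hAAp : A = Ap := by
        rw [hunion, Set.not_nonempty_iff_eq_empty.mp ham]; simp
      exact hApD (hAAp ▸ hx)
  · by_cases ham : Am.Nonempty
    · have : A = Am := by rw [hunion]; simp [Set.not_nonempty_iff_eq_empty.mp hap]
      have : x ∈ {y : Pt | g y < 0} := convexHull_min (fun r hr => hr.2) hconvm (this ▸ hx)
      simp only [Set.mem_setOf_eq] at this; linarith
    · have : A = ∅ := by
        rw [hunion, Set.not_nonempty_iff_eq_empty.mp hap, Set.not_nonempty_iff_eq_empty.mp ham]
        simp
      rw [this] at hx; simp at hx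

/-- Negative-side version of the halfspace split lemma. -/
lemma aux_split_lemma_neg {A D : Set Pt} {g : Pt → ℝ}
    (haff : ∀ p q : Pt, ∀ a b : ℝ, a + b = 1 → g (a • p + b • q) = a * g p + b * g q)
    (hD : Convex ℝ D)
    (hA : ∀ p ∈ A, g p ≤ 0 → p ∈ D)
    (hM : ∀ y ∈ convexHull ℝ A, g y = 0 → y ∈ D)
    {x : Pt} (hx : x ∈ convexHull ℝ A) (hgx : g x ≤ 0) : x ∈ D := by
  refine aux_split_lemma (g := fun y => -(g y)) ?_ hD ?_ ?_ hx (by simpa using hgx)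
  · intro p q a b hab
    simp only [haff p q a b hab]; ring
  · intro p hp hgp
    exact hA p hp (by linarith)
  · intro y hy hgy
    simp only [neg_eq_zero] at hgy
    exact hM y hy hgy

/-- A supporting functional along an edge of the hull. -/
lemma aux_edge_support {S : Set Pt} (hcl : IsClosed (convexHull ℝ S))
    {w : Pt} (hw : w ∈ interior (convexHull ℝ S)) {a b : Pt}
    (hseg : segment ℝ a b ⊆ frontier (convexHull ℝ S)) :
    ∃ f : Pt →L[ℝ] ℝ, (∀ y ∈ convexHull ℝ S, f y ≤ f a) ∧ f a = f b ∧ f w < f a := by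
  set C := convexHull ℝ S with hC
  have hconv : Convex ℝ C := convex_convexHull ℝ S
  set m := midpoint ℝ a b with hm
  have hmfr : m ∈ frontier C := hseg (midpoint_mem_segment a b)
  have hmni : m ∉ interior C := fun h => hmfr.2 h
  obtain ⟨f, hf⟩ := geometric_hahn_banach_open_point (hconv.interior) isOpen_interior hmni
  have hle : ∀ y ∈ C, f y ≤ f m := by
    intro y hy
    by_contra hlt
    push_neg at hlt
    have key : ∀ s : ℝ, 0 < s → s ≤ 1 → s * (f w - f y) < f m - f y := by
      intro s hs0 hs1
      have hmem : s • w + (1 - s) • y ∈ interior C :=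
        hconv.combo_interior_self_mem_interior hw hy hs0 (by linarith) (by ring)
      have := hf _ hmem
      simp only [map_add, f.map_smul, smul_eq_mul] at this
      linarith
    by_cases hcase : f y - f w ≤ 0
    · have := key 1 one_pos le_rfl; linarith
    · push_neg at hcase
      set s0 := (f y - f m) / (f y - f w) with hs0
      have hs0pos : 0 < s0 := div_pos (by linarith) hcase
      by_cases hs01 : s0 ≤ 1
      · have h1 := key s0 hs0pos hs01
        have h2 : s0 * (f w - f y) = f m - f y := by
          rw [hs0]; field_simp; ring
        linarith
      · push_neg at hs01
        rw [hs0] at hs01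
        have h3 : f y - f w < f y - f m := (one_lt_div hcase).mp hs01
        have := key 1 one_pos le_rfl
        linarith
  have haC : a ∈ C := hcl.frontier_subset (hseg (left_mem_segment ℝ a b))
  have hbC : b ∈ C := hcl.frontier_subset (hseg (right_mem_segment ℝ a b))
  have hfm : f m = (f a + f b) / 2 := by
    rw [hm, midpoint_eq_smul_add, f.map_smul]
    simp only [map_add, smul_eq_mul, invOf_eq_inv]
    ring
  have hab : f a = f b := by
    have h1 := hle a haC
    have h2 := hle b hbC
    linarith
  have ham : f a = f m := by
    have h1 := hle a haC
    linarith [hle b hbC]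
  exact ⟨f, fun y hy => ham ▸ hle y hy, hab, ham ▸ hf w hw⟩

set_option maxHeartbeats 1000000 in
theorem sensitivity_unchanged_for_nonneighbor (P : Finset Pt)
    (hgp : GenPos (↑P : Set Pt)) (t u v z : Pt)
    (hc : ConsecutiveCW (↑P : Set Pt) t u v)
    (hz : IsHullVertex (↑P : Set Pt) z)
    (hzn : z ∉ ({t, u, v} : Set Pt)) :
    hullArea (↑P : Set Pt) - hullArea ((↑P : Set Pt) \ {z}) =
      hullArea ((↑P : Set Pt) \ {u}) - hullArea (((↑P : Set Pt) \ {u}) \ {z}) := by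
  obtain ⟨⟨htu, hvt, hvu, hseg1⟩, ⟨huv, _, hvv, hseg2⟩, htv, _⟩ := hc
  obtain ⟨hzP, hznot⟩ := hz
  have htP : t ∈ (↑P : Set Pt) := hvt.1
  have huP : u ∈ (↑P : Set Pt) := hvu.1
  have hvP : v ∈ (↑P : Set Pt) := hvv.1
  simp only [Set.mem_insert_iff, Set.mem_singleton_iff, not_or] at hzn
  obtain ⟨hzt, hzu, hzv⟩ := hzn
  have hcol : ¬ Collinear ℝ ({t, u, v} : Set Pt) := hgp t u v htP huP hvP htu huv htv
  -- the functional for the line t-v, positive on u's side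
  set D0 : ℝ := cross2 (u - t) (v - t) with hD0def
  have hD0 : D0 ≠ 0 := fun h => hcol (aux_collinear_of_cross2' h)
  set g : Pt → ℝ := fun x => D0 * cross2 (x - t) (v - t) with hgdef
  have haff : ∀ p q : Pt, ∀ a b : ℝ, a + b = 1 → g (a • p + b • q) = a * g p + b * g q := by
    intro p q a b hab
    have hb : b = 1 - a := by linarith
    subst hb
    simp only [hgdef, cross2, aux_apply_sub, aux_apply_add, aux_apply_smul]
    ring
  have hgt : g t = 0 := by simp only [hgdef, cross2, aux_apply_sub]; ring
  have hgv : g v = 0 := by simp only [hgdef, cross2, aux_apply_sub]; ring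
  have hgu : 0 < g u := by
    have : g u = D0 * D0 := rfl
    rw [this]
    exact mul_self_pos.mpr hD0
  -- interior point and closedness
  have hfin : (↑P : Set Pt).Finite := P.finite_toSet
  have hcl : IsClosed (convexHull ℝ (↑P : Set Pt)) := (hfin.isCompact_convexHull ℝ).isClosed
  have hspan : affineSpan ℝ (↑P : Set Pt) = ⊤ := by
    rw [AffineSubspace.affineSpan_eq_top_iff_vectorSpan_eq_top_of_nonempty ℝ _ _ ⟨t, htP⟩]
    apply Submodule.eq_top_of_finrank_eq
    have h2 : Module.finrank ℝ Pt = 2 := finrank_euclideanSpace_fin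
    have hle2 : Module.finrank ℝ (vectorSpan ℝ (↑P : Set Pt)) ≤ 2 := by
      have h3 := Submodule.finrank_le (vectorSpan ℝ (↑P : Set Pt))
      omega
    have hmono : Module.finrank ℝ (vectorSpan ℝ ({t, u, v} : Set Pt)) ≤
        Module.finrank ℝ (vectorSpan ℝ (↑P : Set Pt)) := by
      apply Submodule.finrank_mono
      apply vectorSpan_mono
      intro p hp
      rcases hp with rfl | rfl | rfl
      exacts [htP, huP, hvP]
    have hgt1 : ¬ Module.finrank ℝ (vectorSpan ℝ ({t, u, v} : Set Pt)) ≤ 1 := by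
      intro h
      exact hcol (collinear_iff_finrank_le_one.mpr h)
    omega
  obtain ⟨w, hw⟩ : (interior (convexHull ℝ (↑P : Set Pt))).Nonempty := by
    rw [interior_convexHull_nonempty_iff_affineSpan_eq_top]
    exact hspan
  -- supporting functionals
  obtain ⟨f1, hle1, hf1tu, hf1w⟩ := aux_edge_support hcl hw hseg1
  obtain ⟨f2, hle2', hf2uv, hf2w⟩ := aux_edge_support hcl hw hseg2
  have hle2 : ∀ y ∈ convexHull ℝ (↑P : Set Pt), f2 y ≤ f2 u := hle2'
  -- strict inequalities
  have hf1v : f1 v < f1 t := by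
    rcases lt_or_eq_of_le (hle1 v (subset_convexHull ℝ _ hvP)) with h | h
    · exact h
    · exfalso
      apply hcol
      apply aux_collinear_of_cross2
      apply aux_cross2_eq_zero_of_ker (f := f1)
      · exact ⟨w - t, by rw [map_sub]; intro hh; rw [sub_eq_zero] at hh; linarith⟩
      · rw [map_sub, hf1tu, sub_self]
      · rw [map_sub, h, hf1tu, sub_self]
  have hf2t : f2 t < f2 u := by
    rcases lt_or_eq_of_le (hle2 t (subset_convexHull ℝ _ htP)) with h | h
    · exact h
    · exfalso
      apply hcol
      apply aux_collinear_of_cross2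
      apply aux_cross2_eq_zero_of_ker (f := f2)
      · exact ⟨w - u, by rw [map_sub]; intro hh; rw [sub_eq_zero] at hh; linarith⟩
      · rw [map_sub, h, sub_self]
      · rw [map_sub, ← hf2uv, sub_self]
  -- points of the hull on the line t-v lie on the segment [t, v]
  have hline : ∀ y ∈ convexHull ℝ (↑P : Set Pt), g y = 0 → y ∈ segment ℝ t v := by
    intro y hy hgy
    have hc0 : cross2 (y - t) (v - t) = 0 := by
      rcases mul_eq_zero.mp hgy with h | h
      · exact absurd h hD0
      · exact h
    have hc1 : cross2 (v - t) (y - t) = 0 := by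
      have : cross2 (v - t) (y - t) = - cross2 (y - t) (v - t) := by unfold cross2; ring
      rw [this, hc0, neg_zero]
    obtain ⟨r, hr⟩ := aux_cross_parallel (v - t) (y - t) (sub_ne_zero.mpr (Ne.symm htv)) hc1
    have hyeq : y = t + r • (v - t) := by rw [← hr]; abel
    have hf1y : f1 y = f1 t + r * (f1 v - f1 t) := by
      rw [hyeq]
      simp only [map_add, f1.map_smul, map_sub, smul_eq_mul]
    have hf2y : f2 y = f2 t + r * (f2 v - f2 t) := by
      rw [hyeq]
      simp only [map_add, f2.map_smul, map_sub, smul_eq_mul]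
    have hr0 : 0 ≤ r := by nlinarith [hle1 y hy]
    have hr1 : r ≤ 1 := by nlinarith [hle2 y hy, hf2uv]
    rw [segment_eq_image']
    exact ⟨r, ⟨hr0, hr1⟩, hyeq.symm⟩
  -- triangle lemma via barycentric coordinates
  have htri : ∀ x : Pt, f1 x ≤ f1 t → f2 x ≤ f2 u → 0 ≤ g x →
      x ∈ convexHull ℝ ({t, u, v} : Set Pt) := by
    intro x h1 h2 h3
    have hdec := aux_cross_decomp (u - t) (v - t) (x - t) hD0
    rw [← hD0def] at hdec
    set b : ℝ := cross2 (x - t) (v - t) / D0 with hbdef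
    set c : ℝ := cross2 (u - t) (x - t) / D0 with hcdef
    have hxeq : x = (1 - b - c) • t + b • u + c • v := by
      have h := hdec
      linear_combination (norm := module) h
    have hb0 : 0 ≤ b := by
      have hgx : g x = b * (D0 * D0) := by
        rw [hgdef, hbdef]; field_simp
      have hD2 : 0 < D0 * D0 := mul_self_pos.mpr hD0
      nlinarith [h3, hgx]
    have hf1x : f1 x = (1 - b - c) * f1 t + b * f1 u + c * f1 v := by
      rw [hxeq]
      simp only [map_add, f1.map_smul, smul_eq_mul]
    have hc0 : 0 ≤ c := by nlinarith [hf1tu]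
    have hf2x : f2 x = (1 - b - c) * f2 t + b * f2 u + c * f2 v := by
      rw [hxeq]
      simp only [map_add, f2.map_smul, smul_eq_mul]
    have ha0 : 0 ≤ 1 - b - c := by nlinarith [hf2uv]
    rw [hxeq]
    exact aux_combo3_mem (convex_convexHull ℝ _)
      (subset_convexHull ℝ _ (by simp)) (subset_convexHull ℝ _ (by simp))
      (subset_convexHull ℝ _ (by simp)) ha0 hb0 hc0 (by ring)
  -- z is strictly on the other side of the line t-v
  have hgz : g z < 0 := by
    by_contra hcon
    push_neg at hcon
    apply hznot
    have hzin : z ∈ convexHull ℝ ({t, u, v} : Set Pt) :=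
      htri z (hle1 z (subset_convexHull ℝ _ hzP)) (hle2 z (subset_convexHull ℝ _ hzP)) hcon
    refine convexHull_mono ?_ hzin
    rintro p (rfl | rfl | rfl)
    · exact ⟨htP, by simp [Ne.symm hzt]⟩
    · exact ⟨huP, by simp [Ne.symm hzu]⟩
    · exact ⟨hvP, by simp [Ne.symm hzv]⟩
  -- segment [t,v] inside various hulls
  have hsegsub : ∀ Q : Set Pt, t ∈ Q → v ∈ Q → segment ℝ t v ⊆ convexHull ℝ Q := by
    intro Q ht hv
    exact (convex_convexHull ℝ Q).segment_subset (subset_convexHull ℝ _ ht)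
      (subset_convexHull ℝ _ hv)
  -- KEY 1 : CH(P\u) ∪ CH(P\z) = CH(P)
  have KEY1 : convexHull ℝ ((↑P : Set Pt) \ {u}) ∪ convexHull ℝ ((↑P : Set Pt) \ {z}) =
      convexHull ℝ (↑P : Set Pt) := by
    apply Set.Subset.antisymm
    · exact Set.union_subset (convexHull_mono Set.diff_subset)
        (convexHull_mono Set.diff_subset)
    · intro x hx
      by_cases hxu : x ∈ convexHull ℝ ((↑P : Set Pt) \ {u})
      · exact Set.mem_union_left _ hxu
      · refine Set.mem_union_right _ ?_
        have hgx : 0 ≤ g x := by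
          by_contra hneg
          push_neg at hneg
          refine hxu (aux_split_lemma_neg haff (convex_convexHull ℝ _)
            ?_ ?_ hx (by linarith))
          · intro p hp hgp
            refine subset_convexHull ℝ _ ⟨hp, ?_⟩
            simp only [Set.mem_singleton_iff]
            rintro rfl
            linarith
          · intro y hy hgy
            exact hsegsub ((↑P : Set Pt) \ {u}) ⟨htP, by simp [htu]⟩ ⟨hvP, by simp [Ne.symm huv]⟩ (hline y hy hgy)
        refine aux_split_lemma haff (convex_convexHull ℝ _) ?_ ?_ hx hgx
        · intro p hp hgp
          refine subset_convexHull ℝ _ ⟨hp, ?_⟩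
          simp only [Set.mem_singleton_iff]
          rintro rfl
          linarith
        · intro y hy hgy
          exact hsegsub ((↑P : Set Pt) \ {z}) ⟨htP, by simp [Ne.symm hzt]⟩
            ⟨hvP, by simp [Ne.symm hzv]⟩ (hline y hy hgy)
  -- KEY 2 : CH(P\u) ∩ CH(P\z) = CH((P\u)\z)
  have KEY2 : convexHull ℝ ((↑P : Set Pt) \ {u}) ∩ convexHull ℝ ((↑P : Set Pt) \ {z}) =
      convexHull ℝ (((↑P : Set Pt) \ {u}) \ {z}) := by
    apply Set.Subset.antisymm
    · rintro x ⟨hxu, hxz⟩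
      by_cases hgx : 0 ≤ g x
      · refine aux_split_lemma haff (convex_convexHull ℝ _) ?_ ?_ hxu hgx
        · intro p hp hgp
          refine subset_convexHull ℝ _ ⟨hp, ?_⟩
          simp only [Set.mem_singleton_iff]
          rintro rfl
          linarith
        · intro y hy hgy
          refine hsegsub (((↑P : Set Pt) \ {u}) \ {z}) ⟨⟨htP, by simp [htu]⟩, by simp [Ne.symm hzt]⟩
            ⟨⟨hvP, by simp [Ne.symm huv]⟩, by simp [Ne.symm hzv]⟩
            (hline y (convexHull_mono Set.diff_subset hy) hgy)
      · push_neg at hgx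
        have : x ∈ convexHull ℝ (((↑P : Set Pt) \ {z}) \ {u}) := by
          refine aux_split_lemma_neg haff (convex_convexHull ℝ _)
            ?_ ?_ hxz (by linarith)
          · intro p hp hgp
            refine subset_convexHull ℝ _ ⟨hp, ?_⟩
            simp only [Set.mem_singleton_iff]
            rintro rfl
            linarith
          · intro y hy hgy
            refine hsegsub (((↑P : Set Pt) \ {z}) \ {u}) ⟨⟨htP, by simp [Ne.symm hzt]⟩, by simp [htu]⟩
              ⟨⟨hvP, by simp [Ne.symm hzv]⟩, by simp [Ne.symm huv]⟩
              (hline y (convexHull_mono Set.diff_subset hy) hgy)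
        rwa [Set.diff_diff_comm] at this
    · exact Set.subset_inter
        (convexHull_mono Set.diff_subset)
        (convexHull_mono (by rw [Set.diff_diff_comm]; exact Set.diff_subset))
  -- measure-theoretic conclusion
  have hmeas2 : MeasurableSet (convexHull ℝ ((↑P : Set Pt) \ {z})) :=
    ((hfin.diff (t := {z})).isCompact_convexHull ℝ).isClosed.measurableSet
  have hie := measure_union_add_inter (μ := volume)
    (convexHull ℝ ((↑P : Set Pt) \ {u})) hmeas2
  rw [KEY1, KEY2] at hie
  simp only [hullArea]
  set a := volume (convexHull ℝ (↑P : Set Pt)) with hadef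
  set b := volume (convexHull ℝ ((↑P : Set Pt) \ {z})) with hbdef
  set c := volume (convexHull ℝ ((↑P : Set Pt) \ {u})) with hcdef
  set d := volume (convexHull ℝ (((↑P : Set Pt) \ {u}) \ {z})) with hddef
  -- hie : a + d = c + b
  have ha_top : a ≠ ⊤ := (hfin.isCompact_convexHull ℝ).measure_lt_top.ne
  have hba : b ≤ a := measure_mono (convexHull_mono Set.diff_subset)
  have hca : c ≤ a := measure_mono (convexHull_mono Set.diff_subset)
  have hdc : d ≤ c := measure_mono (convexHull_mono Set.diff_subset)
  have hb_top : b ≠ ⊤ := ne_top_of_le_ne_top ha_top hba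
  have hc_top : c ≠ ⊤ := ne_top_of_le_ne_top ha_top hca
  have hd_top : d ≠ ⊤ := ne_top_of_le_ne_top hc_top hdc
  rw [← ENNReal.toReal_eq_toReal_iff' (ENNReal.sub_ne_top ha_top) (ENNReal.sub_ne_top hc_top)]
  rw [ENNReal.toReal_sub_of_le hba ha_top, ENNReal.toReal_sub_of_le hdc hc_top]
  have hie' := congrArg ENNReal.toReal hie
  rw [ENNReal.toReal_add ha_top hd_top, ENNReal.toReal_add hc_top hb_top] at hie'
  linarith
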